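/- Let Ω ⊆ ℂ be open and let τ, ρ : Ω → ℝ be smooth with ρ > 0 and Δ₀τ + e^{2τ} = 0 on Ω. Then at each point of Ω the identity ρ² + e^{−2τ} ρ Δ₀ρ = 1 + e^{−2τ}(ρ_x² + ρ_y²) holds if and only if the function σ := τ − log ρ satisfies Δ₀σ + e^{2σ} = 0 at that point. In other words, ρ satisfies the Ribaucour equation relative to τ exactly when the conformal metric (1/ρ²)e^{2τ}(dx²+dy²) = e^{2σ}(dx²+dy²) has constant Gaussian curvature 1. -/

import Mathlib

/-- Partial derivative in the `x`-direction of a function on `ℂ ≅ ℝ²`. -/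
noncomputable def pdx (u : ℂ → ℝ) (z : ℂ) : ℝ := fderiv ℝ u z 1

/-- Partial derivative in the `y`-direction of a function on `ℂ ≅ ℝ²`. -/
noncomputable def pdy (u : ℂ → ℝ) (z : ℂ) : ℝ := fderiv ℝ u z Complex.I

/-- Flat Laplacian `Δ₀u = u_xx + u_yy`. -/
noncomputable def lap (u : ℂ → ℝ) (z : ℂ) : ℝ := pdx (pdx u) z + pdy (pdy u) z

noncomputable def pd (v : ℂ) (u : ℂ → ℝ) (z : ℂ) : ℝ := fderiv ℝ u z v

lemma contDiffOn_pd (v : ℂ) {u : ℂ → ℝ} {Ω : Set ℂ} (hΩ : IsOpen Ω)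
    (hu : ContDiffOn ℝ (⊤ : ℕ∞) u Ω) : ContDiffOn ℝ (⊤ : ℕ∞) (pd v u) Ω := by
  exact (hu.fderiv_of_isOpen hΩ (by simp)).clm_apply contDiffOn_const

lemma diffAt_of_contDiffOn {u : ℂ → ℝ} {Ω : Set ℂ} (hΩ : IsOpen Ω)
    (hu : ContDiffOn ℝ (⊤ : ℕ∞) u Ω) {z : ℂ} (hz : z ∈ Ω) :
    DifferentiableAt ℝ u z :=
  (hu.differentiableOn (by simp)).differentiableAt (hΩ.mem_nhds hz)

lemma pd_sigma (v : ℂ) {Ω : Set ℂ} (hΩ : IsOpen Ω) {τ ρ σ : ℂ → ℝ}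
    (hτ : ContDiffOn ℝ (⊤ : ℕ∞) τ Ω) (hρ : ContDiffOn ℝ (⊤ : ℕ∞) ρ Ω)
    (hρpos : ∀ z ∈ Ω, 0 < ρ z)
    (hσ : ∀ z ∈ Ω, σ z = τ z - Real.log (ρ z)) :
    ∀ z ∈ Ω, pd v σ z = pd v τ z - (ρ z)⁻¹ * pd v ρ z := by
  intro z hz
  have hev : σ =ᶠ[nhds z] fun w => τ w - Real.log (ρ w) :=
    Filter.eventuallyEq_of_mem (hΩ.mem_nhds hz) (fun x hx => hσ x hx)
  have hτ' : HasFDerivAt τ (fderiv ℝ τ z) z :=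
    (diffAt_of_contDiffOn hΩ hτ hz).hasFDerivAt
  have hρ' : HasFDerivAt ρ (fderiv ℝ ρ z) z :=
    (diffAt_of_contDiffOn hΩ hρ hz).hasFDerivAt
  have hlog := hρ'.log (ne_of_gt (hρpos z hz))
  have := (hτ'.sub hlog).fderiv
  have h2 : fderiv ℝ σ z = fderiv ℝ τ z - (ρ z)⁻¹ • fderiv ℝ ρ z := by
    rw [hev.fderiv_eq]; exact this
  show fderiv ℝ σ z v = _
  rw [h2]; simp [pd]

lemma pd2_sigma (v : ℂ) {Ω : Set ℂ} (hΩ : IsOpen Ω) {τ ρ σ : ℂ → ℝ}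
    (hτ : ContDiffOn ℝ (⊤ : ℕ∞) τ Ω) (hρ : ContDiffOn ℝ (⊤ : ℕ∞) ρ Ω)
    (hρpos : ∀ z ∈ Ω, 0 < ρ z)
    (hσ : ∀ z ∈ Ω, σ z = τ z - Real.log (ρ z)) :
    ∀ z ∈ Ω, pd v (pd v σ) z
      = pd v (pd v τ) z - (ρ z)⁻¹ * pd v (pd v ρ) z + (ρ z ^ 2)⁻¹ * (pd v ρ z) ^ 2 := by
  intro z hz
  have hev : pd v σ =ᶠ[nhds z] fun w => pd v τ w - (ρ w)⁻¹ * pd v ρ w :=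
    Filter.eventuallyEq_of_mem (hΩ.mem_nhds hz)
      (fun x hx => pd_sigma v hΩ hτ hρ hρpos hσ x hx)
  have hρ' : HasFDerivAt ρ (fderiv ℝ ρ z) z :=
    (diffAt_of_contDiffOn hΩ hρ hz).hasFDerivAt
  have hpdρ : HasFDerivAt (pd v ρ) (fderiv ℝ (pd v ρ) z) z :=
    (diffAt_of_contDiffOn hΩ (contDiffOn_pd v hΩ hρ) hz).hasFDerivAt
  have hpdτ : HasFDerivAt (pd v τ) (fderiv ℝ (pd v τ) z) z :=
    (diffAt_of_contDiffOn hΩ (contDiffOn_pd v hΩ hτ) hz).hasFDerivAt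
  have hne : ρ z ≠ 0 := ne_of_gt (hρpos z hz)
  have hinv : HasFDerivAt (fun w => (ρ w)⁻¹)
      ((ContinuousLinearMap.smulRight (1 : ℝ →L[ℝ] ℝ) (-(ρ z ^ 2)⁻¹)).comp (fderiv ℝ ρ z)) z :=
    (hasFDerivAt_inv hne).comp z hρ'
  have hmul := hinv.mul hpdρ
  have hsub := hpdτ.sub hmul
  have h2 : fderiv ℝ (pd v σ) z = _ := hev.fderiv_eq.trans hsub.fderiv
  show fderiv ℝ (pd v σ) z v = _
  rw [h2]
  simp [pd, ContinuousLinearMap.smulRight_apply]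
  ring

/-- with `τ` satisfying the Liouville equation on an open `Ω ⊆ ℂ` and
`ρ > 0` smooth, at each point of `Ω` the Ribaucour equation
`ρ² + e^{-2τ} ρ Δ₀ρ = 1 + e^{-2τ}(ρ_x² + ρ_y²)` holds iff `σ = τ - log ρ` satisfies
`Δ₀σ + e^{2σ} = 0` there, i.e. iff the metric `(1/ρ²)e^{2τ}(dx²+dy²)` has curvature `1`. -/
theorem ribaucour_iff_dual_conformal_factor_liouville
    (Ω : Set ℂ) (hΩ : IsOpen Ω) (τ ρ : ℂ → ℝ)
    (hτ : ContDiffOn ℝ (⊤ : ℕ∞) τ Ω) (hρ : ContDiffOn ℝ (⊤ : ℕ∞) ρ Ω)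
    (hρpos : ∀ z ∈ Ω, 0 < ρ z)
    (hLiouville : ∀ z ∈ Ω, lap τ z + Real.exp (2 * τ z) = 0)
    (σ : ℂ → ℝ) (hσ : ∀ z ∈ Ω, σ z = τ z - Real.log (ρ z)) :
    ∀ z ∈ Ω,
      (ρ z ^ 2 + Real.exp (-(2 * τ z)) * ρ z * lap ρ z
          = 1 + Real.exp (-(2 * τ z)) * (pdx ρ z ^ 2 + pdy ρ z ^ 2))
        ↔ lap σ z + Real.exp (2 * σ z) = 0 := by
  intro z hz
  have hpdx : pdx = pd 1 := rfl
  have hpdy : pdy = pd Complex.I := rfl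
  have hrpos := hρpos z hz
  have hr2 : (0:ℝ) < ρ z ^ 2 := by positivity
  have hEpos : (0:ℝ) < Real.exp (2 * τ z) := Real.exp_pos _
  have hlapσ : lap σ z = lap τ z - (ρ z)⁻¹ * lap ρ z + (ρ z ^ 2)⁻¹ * (pdx ρ z ^ 2 + pdy ρ z ^ 2) := by
    have h1 := pd2_sigma 1 hΩ hτ hρ hρpos hσ z hz
    have h2 := pd2_sigma Complex.I hΩ hτ hρ hρpos hσ z hz
    simp only [lap, hpdx, hpdy, h1, h2]
    ring
  have hexpσ : Real.exp (2 * σ z) = Real.exp (2 * τ z) / ρ z ^ 2 := by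
    rw [hσ z hz]
    rw [mul_sub, Real.exp_sub, two_mul (Real.log (ρ z)), Real.exp_add,
      Real.exp_log hrpos]
    ring_nf
  have hlapτ : lap τ z = -Real.exp (2 * τ z) := by linarith [hLiouville z hz]
  rw [hlapσ, hexpσ, hlapτ, Real.exp_neg]
  set E := Real.exp (2 * τ z) with hE
  set r := ρ z with hr
  set D := lap ρ z with hD
  set G := pdx ρ z ^ 2 + pdy ρ z ^ 2 with hG
  have hrne : r ≠ 0 := ne_of_gt hrpos
  have hEne : E ≠ 0 := ne_of_gt hEpos
  have key : (-E - r⁻¹ * D + (r ^ 2)⁻¹ * G + E / r ^ 2) * (r ^ 2 * E⁻¹)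
      = (1 + E⁻¹ * G) - (r ^ 2 + E⁻¹ * r * D) := by
    field_simp
    ring
  have hcne : r ^ 2 * E⁻¹ ≠ 0 := by positivity
  constructor
  · intro h
    have h0 : (-E - r⁻¹ * D + (r ^ 2)⁻¹ * G + E / r ^ 2) * (r ^ 2 * E⁻¹) = 0 := by
      rw [key]; linarith
    have := (mul_eq_zero.mp h0).resolve_right hcne
    linarith
  · intro h
    have h0 : (-E - r⁻¹ * D + (r ^ 2)⁻¹ * G + E / r ^ 2) = 0 := by linarith
    have := key.symm.trans (by rw [h0, zero_mul])
    linarith
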